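/- arXiv:1004.3019 — 3 statements merged into one kernel-verified Lean document; each statement's English description precedes it below -/
import Mathlib

section
/- Let ρ : SL₂(ℤ) → GL₄(ℂ) be an irreducible representation. Then the eigenvalues of ρ(S), where S = [[0,-1],[1,0]], are either {1,1,-1,-1} or {i,i,-i,-i}; in particular det ρ(S) = 1. -/
open Polynomial Matrix

abbrev SL2Z := Matrix.SpecialLinearGroup (Fin 2) ℤ

/-- A subspace invariant under every matrix in the image of `ρ`. -/
def RepInvariant {d : ℕ} (ρ : SL2Z →* GL (Fin d) ℂ) (W : Submodule ℂ (Fin d → ℂ)) : Prop :=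
  ∀ γ : SL2Z, ∀ v ∈ W, ((ρ γ : Matrix (Fin d) (Fin d) ℂ).mulVec v) ∈ W

/-- Irreducibility of a `d`-dimensional representation of `SL₂(ℤ)`. -/
def RepIrreducible {d : ℕ} (ρ : SL2Z →* GL (Fin d) ℂ) : Prop :=
  (⊥ : Submodule ℂ (Fin d → ℂ)) ≠ ⊤ ∧
    ∀ W : Submodule ℂ (Fin d → ℂ), RepInvariant ρ W → W = ⊥ ∨ W = ⊤

open ModularGroup

section Aux

lemma S_sq_coe : ((S * S : SL2Z) : Matrix (Fin 2) (Fin 2) ℤ) = -1 := by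
  rw [Matrix.SpecialLinearGroup.coe_mul]; exact S_mul_S_eq

lemma ST_closure : Subgroup.closure ({S, T} : Set SL2Z) = ⊤ := by
  set H := Subgroup.closure ({S, T} : Set SL2Z) with hH
  have hS : S ∈ H := Subgroup.subset_closure (by simp)
  have hT : T ∈ H := Subgroup.subset_closure (by simp)
  rw [eq_top_iff]
  rintro g -
  suffices h : ∀ n : ℕ, ∀ g : SL2Z, (g.1 1 0).natAbs = n → g ∈ H from h _ g rfl
  intro n
  induction n using Nat.strong_induction_on with
  | _ n ih =>
    intro g hg
    obtain ⟨a, b, c, d, ha, hb, hc', hd⟩ :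
        ∃ a b c d : ℤ, g.1 0 0 = a ∧ g.1 0 1 = b ∧ g.1 1 0 = c ∧ g.1 1 1 = d :=
      ⟨_, _, _, _, rfl, rfl, rfl, rfl⟩
    have hg1 : (g : Matrix (Fin 2) (Fin 2) ℤ) = !![a, b; c, d] := by
      rw [Matrix.eta_fin_two g.1, ha, hb, hc', hd]
    have hdet : a * d - b * c = 1 := by
      have h2 := g.2
      rw [Matrix.det_fin_two, ha, hb, hc', hd] at h2
      exact h2
    rw [hc'] at hg
    rcases eq_or_ne c 0 with hc | hc
    · rw [hc, mul_zero, sub_zero] at hdet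
      rcases Int.mul_eq_one_iff_eq_one_or_neg_one.mp hdet with ⟨ha1, hd1⟩ | ⟨ha1, hd1⟩
      · have : g = T ^ b := by
          refine Subtype.ext ?_
          rw [coe_T_zpow, hg1, ha1, hd1, hc]
        rw [this]; exact Subgroup.zpow_mem H hT _
      · have : g = S * S * T ^ (-b) := by
          refine Subtype.ext ?_
          rw [Matrix.SpecialLinearGroup.coe_mul, S_sq_coe, coe_T_zpow, hg1, ha1, hd1, hc]
          ext i j
          fin_cases i <;> fin_cases j <;> simp
        rw [this]
        exact H.mul_mem (H.mul_mem hS hS) (Subgroup.zpow_mem H hT _)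
    · set q := a / c with hq
      have hSTg : ((S * (T ^ (-q) * g) : SL2Z) : Matrix (Fin 2) (Fin 2) ℤ)
          = !![-c, -d; a - q * c, b - q * d] := by
        rw [Matrix.SpecialLinearGroup.coe_mul, Matrix.SpecialLinearGroup.coe_mul, coe_T_zpow, hg1, coe_S,
          Matrix.mul_fin_two, Matrix.mul_fin_two]
        congr 1 <;> ring_nf
      have hr : a - q * c = a % c := by rw [hq, Int.emod_def]; ring
      have hlt : (a % c).natAbs < n := by
        rw [← hg]
        rcases lt_or_gt_of_ne hc with h | h
        · have h1 := Int.emod_nonneg a hc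
          have h2 := Int.emod_lt_of_pos a (b := -c) (by omega)
          rw [Int.emod_neg] at h2
          omega
        · have h1 := Int.emod_nonneg a hc
          have h2 := Int.emod_lt_of_pos a h
          omega
      have hmem : S * (T ^ (-q) * g) ∈ H := by
        apply ih _ hlt
        rw [hSTg, hr]
        simp
      have : g = T ^ q * (S⁻¹ * (S * (T ^ (-q) * g))) := by group
      rw [this]
      exact H.mul_mem (Subgroup.zpow_mem H hT _) (H.mul_mem (H.inv_mem hS) hmem)

variable {d : ℕ} (ρ : SL2Z →* GL (Fin d) ℂ)

lemma coe_rho_mul (γ₁ γ₂ : SL2Z) :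
    (ρ (γ₁ * γ₂) : Matrix (Fin d) (Fin d) ℂ) = (ρ γ₁ : Matrix (Fin d) (Fin d) ℂ) * ρ γ₂ := by
  rw [_root_.map_mul]; rfl

lemma coe_rho_one : (ρ 1 : Matrix (Fin d) (Fin d) ℂ) = 1 := by
  rw [_root_.map_one]; rfl

lemma invariant_of_ST (W : Submodule ℂ (Fin d → ℂ))
    (hS : ∀ v ∈ W, ((ρ S : Matrix (Fin d) (Fin d) ℂ).mulVec v) ∈ W)
    (hT : ∀ v ∈ W, ((ρ T : Matrix (Fin d) (Fin d) ℂ).mulVec v) ∈ W) :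
    RepInvariant ρ W := by
  have key : ∀ γ : SL2Z, (∀ v ∈ W, ((ρ γ : Matrix (Fin d) (Fin d) ℂ).mulVec v) ∈ W) →
      ∀ v ∈ W, ((ρ γ⁻¹ : Matrix (Fin d) (Fin d) ℂ).mulVec v) ∈ W := by
    intro γ hγ v hv
    set M := (ρ γ : Matrix (Fin d) (Fin d) ℂ)
    set N := (ρ γ⁻¹ : Matrix (Fin d) (Fin d) ℂ)
    have hNM : N * M = 1 := by
      rw [← coe_rho_mul, inv_mul_cancel, coe_rho_one]
    have hre : ∀ w ∈ W, M.mulVecLin w ∈ W := hγ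
    set e : W →ₗ[ℂ] W := (M.mulVecLin).restrict hre with he
    have hinj : Function.Injective e := by
      intro w w' hww
      have h1 : M.mulVec w.1 = M.mulVec w'.1 := congrArg Subtype.val hww
      have h2 : N.mulVec (M.mulVec w.1) = N.mulVec (M.mulVec w'.1) := by rw [h1]
      rwa [mulVec_mulVec, mulVec_mulVec, hNM, one_mulVec, one_mulVec, ← Subtype.ext_iff] at h2
    have hsurj : Function.Surjective e := (LinearMap.injective_iff_surjective).mp hinj
    obtain ⟨w, hw⟩ := hsurj ⟨v, hv⟩
    have hw1 : M.mulVec w.1 = v := congrArg Subtype.val hw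
    have : N.mulVec v = w.1 := by
      rw [← hw1, mulVec_mulVec, hNM, one_mulVec]
    rw [this]; exact w.2
  let K : Subgroup SL2Z :=
    { carrier := {γ : SL2Z | ∀ v ∈ W, ((ρ γ : Matrix (Fin d) (Fin d) ℂ).mulVec v) ∈ W}
      one_mem' := by intro v hv; rw [coe_rho_one, one_mulVec]; exact hv
      mul_mem' := by
        intro γ₁ γ₂ h₁ h₂ v hv
        rw [coe_rho_mul, ← mulVec_mulVec]
        exact h₁ _ (h₂ _ hv)
      inv_mem' := by intro γ hγ; exact key γ hγ }
  intro γ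
  have hK : Subgroup.closure ({S, T} : Set SL2Z) ≤ K := by
    rw [Subgroup.closure_le]
    rintro x (rfl | rfl)
    exacts [hS, hT]
  exact hK (by rw [ST_closure]; trivial)

/-- no one-dimensional invariant line for a 4-dim irreducible rep -/
lemma no_inv_line (ρ : SL2Z →* GL (Fin 4) ℂ) (hirr : RepIrreducible ρ)
    {v : Fin 4 → ℂ} (hv : v ≠ 0) {ν τ : ℂ}
    (h1 : (ρ S : Matrix (Fin 4) (Fin 4) ℂ).mulVec v = ν • v)
    (h2 : (ρ T : Matrix (Fin 4) (Fin 4) ℂ).mulVec v = τ • v) : False := by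
  set W : Submodule ℂ (Fin 4 → ℂ) := ℂ ∙ v with hW
  have hWinv : RepInvariant ρ W := by
    apply invariant_of_ST
    · intro w hw
      obtain ⟨a, rfl⟩ := Submodule.mem_span_singleton.mp hw
      rw [mulVec_smul, h1, smul_smul]
      exact Submodule.mem_span_singleton.mpr ⟨(a * ν : ℂ), rfl⟩
    · intro w hw
      obtain ⟨a, rfl⟩ := Submodule.mem_span_singleton.mp hw
      rw [mulVec_smul, h2, smul_smul]
      exact Submodule.mem_span_singleton.mpr ⟨(a * τ : ℂ), rfl⟩
  rcases hirr.2 W hWinv with h | h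
  · have hvW : v ∈ W := Submodule.mem_span_singleton_self v
    rw [h] at hvW
    exact hv ((Submodule.mem_bot ℂ).mp hvW)
  · have h4 : Module.finrank ℂ W = 4 := by
      rw [h, finrank_top, Module.finrank_fin_fun]
    rw [finrank_span_singleton hv] at h4
    norm_num at h4

lemma S_sq_central (γ : SL2Z) : S * S * γ = γ * (S * S) := by
  refine Subtype.ext ?_
  simp only [Matrix.SpecialLinearGroup.coe_mul, S_mul_S_eq]
  simp

lemma S_sq_sq : (S * S) * (S * S) = (1 : SL2Z) := by
  refine Subtype.ext ?_
  rw [Matrix.SpecialLinearGroup.coe_mul, S_sq_coe]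
  simp

lemma rho_S_sq {d : ℕ} (ρ : SL2Z →* GL (Fin d) ℂ) (hirr : RepIrreducible ρ) :
    (ρ S : Matrix (Fin d) (Fin d) ℂ) * (ρ S : Matrix (Fin d) (Fin d) ℂ) = 1 ∨
    (ρ S : Matrix (Fin d) (Fin d) ℂ) * (ρ S : Matrix (Fin d) (Fin d) ℂ) = -1 := by
  set M := (ρ (S * S) : Matrix (Fin d) (Fin d) ℂ) with hM
  have hMcoe : (ρ S : Matrix (Fin d) (Fin d) ℂ) * (ρ S : Matrix (Fin d) (Fin d) ℂ) = M := by
    rw [hM, coe_rho_mul]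
  rw [hMcoe]
  have hcomm : ∀ γ : SL2Z, M * (ρ γ : Matrix (Fin d) (Fin d) ℂ)
      = (ρ γ : Matrix (Fin d) (Fin d) ℂ) * M := by
    intro γ
    rw [hM, ← coe_rho_mul, ← coe_rho_mul, S_sq_central]
  have hM2 : M * M = 1 := by
    rw [hM, ← coe_rho_mul, S_sq_sq, coe_rho_one]
  set Wp : Submodule ℂ (Fin d → ℂ) := LinearMap.ker ((M - 1).mulVecLin) with hWp
  set Wm : Submodule ℂ (Fin d → ℂ) := LinearMap.ker ((M + 1).mulVecLin) with hWm
  have hmemp : ∀ v, v ∈ Wp ↔ M.mulVec v = v := by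
    intro v
    rw [hWp, LinearMap.mem_ker, mulVecLin_apply, sub_mulVec, one_mulVec, sub_eq_zero]
  have hmemm : ∀ v, v ∈ Wm ↔ M.mulVec v = -v := by
    intro v
    rw [hWm, LinearMap.mem_ker, mulVecLin_apply, add_mulVec, one_mulVec, add_eq_zero_iff_eq_neg]
  have hinvp : RepInvariant ρ Wp := by
    intro γ v hv
    rw [hmemp] at hv ⊢
    rw [mulVec_mulVec, hcomm, ← mulVec_mulVec, hv]
  have hinvm : RepInvariant ρ Wm := by
    intro γ v hv
    rw [hmemm] at hv ⊢
    rw [mulVec_mulVec, hcomm, ← mulVec_mulVec, hv, mulVec_neg]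
  have hsup : Wp ⊔ Wm = ⊤ := by
    rw [eq_top_iff]
    rintro v -
    have h1 : (2:ℂ)⁻¹ • (v + M.mulVec v) ∈ Wp := by
      rw [hmemp, mulVec_smul, mulVec_add, mulVec_mulVec, hM2, one_mulVec, add_comm]
    have h2 : (2:ℂ)⁻¹ • (v - M.mulVec v) ∈ Wm := by
      rw [hmemm, mulVec_smul, mulVec_sub, mulVec_mulVec, hM2, one_mulVec, ← smul_neg, neg_sub]
    have hsum : (v + M.mulVec v) + (v - M.mulVec v) = (2:ℂ) • v := by
      rw [two_smul]; abel
    have : v = (2:ℂ)⁻¹ • (v + M.mulVec v) + (2:ℂ)⁻¹ • (v - M.mulVec v) := by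
      rw [← smul_add, hsum, smul_smul, inv_mul_cancel₀ two_ne_zero, one_smul]
    rw [this]
    exact Submodule.add_mem_sup h1 h2
  rcases hirr.2 Wp hinvp with hp | hp
  · rcases hirr.2 Wm hinvm with hm | hm
    · rw [hp, hm, sup_idem] at hsup
      exact absurd hsup hirr.1
    · right
      have : ∀ v, (M + 1).mulVec v = 0 := by
        intro v
        have : v ∈ Wm := by rw [hm]; trivial
        rw [hWm, LinearMap.mem_ker, mulVecLin_apply] at this
        exact this
      have h0 : (M + 1) = 0 := by
        ext i j
        have := congrFun (this (Pi.single j 1)) i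
        rwa [mulVec_single_one] at this
      exact eq_neg_of_add_eq_zero_left h0
  · left
    have : ∀ v, (M - 1).mulVec v = 0 := by
      intro v
      have : v ∈ Wp := by rw [hp]; trivial
      rw [hWp, LinearMap.mem_ker, mulVecLin_apply] at this
      exact this
    have h0 : (M - 1) = 0 := by
      ext i j
      have := congrFun (this (Pi.single j 1)) i
      rwa [mulVec_single_one] at this
    exact sub_eq_zero.mp h0

/-- the order-3 element `R = T * S⁻¹`. -/
def RR : SL2Z := ⟨!![-1, 1; -1, 0], by norm_num [Matrix.det_fin_two_of]⟩

lemma RR_mul_S : RR * S = T := by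
  refine Subtype.ext ?_
  rw [Matrix.SpecialLinearGroup.coe_mul]
  show (!![-1, 1; -1, 0] : Matrix (Fin 2) (Fin 2) ℤ) * !![0, -1; 1, 0] = !![1, 1; 0, 1]
  norm_num [Matrix.mul_fin_two]

lemma RR_cube : RR * (RR * RR) = (1 : SL2Z) := by
  refine Subtype.ext ?_
  rw [Matrix.SpecialLinearGroup.coe_mul, Matrix.SpecialLinearGroup.coe_mul]
  show (!![-1, 1; -1, 0] : Matrix (Fin 2) (Fin 2) ℤ) * (!![-1, 1; -1, 0] * !![-1, 1; -1, 0]) = 1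
  norm_num [Matrix.mul_fin_two]
  exact (Matrix.eta_fin_two 1).symm.trans (by norm_num)

/-- Each eigenspace of `ρ S` has dimension at most 2. -/
lemma dim_le_two (ρ : SL2Z →* GL (Fin 4) ℂ) (hirr : RepIrreducible ρ) (ν : ℂ) :
    Module.finrank ℂ
      (LinearMap.ker ((ρ S : Matrix (Fin 4) (Fin 4) ℂ).mulVecLin - ν • LinearMap.id)) ≤ 2 := by
  by_contra h3
  push_neg at h3
  set A := (ρ S : Matrix (Fin 4) (Fin 4) ℂ) with hA
  set B := (ρ RR : Matrix (Fin 4) (Fin 4) ℂ) with hB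
  set g : (Fin 4 → ℂ) →ₗ[ℂ] (Fin 4 → ℂ) := B.mulVecLin with hg
  set E := LinearMap.ker (A.mulVecLin - ν • LinearMap.id) with hE
  have hmemE : ∀ v, v ∈ E ↔ A.mulVec v = ν • v := by
    intro v
    rw [hE, LinearMap.mem_ker]
    constructor
    · intro h
      have := congrArg (· + ν • v) h
      simpa [sub_add_cancel] using this
    · intro h
      simp [h]
  have hg3 : ∀ v, g (g (g v)) = v := by
    intro v
    rw [hg]
    simp only [mulVecLin_apply, mulVec_mulVec]
    rw [← coe_rho_mul, ← coe_rho_mul, RR_cube, coe_rho_one, one_mulVec]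
  -- g as an equivalence
  let ge : (Fin 4 → ℂ) ≃ₗ[ℂ] (Fin 4 → ℂ) :=
    LinearEquiv.ofLinear g (g ∘ₗ g) (LinearMap.ext fun v => hg3 v) (LinearMap.ext fun v => hg3 v)
  have hge : (ge : (Fin 4 → ℂ) →ₗ[ℂ] (Fin 4 → ℂ)) = g := rfl
  have hcomap : ∀ W : Submodule ℂ (Fin 4 → ℂ), Module.finrank ℂ (W.comap g) = Module.finrank ℂ W := by
    intro W
    rw [← hge, Submodule.comap_equiv_eq_map_symm]
    exact LinearEquiv.finrank_map_eq _ _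
  have hdim : ∀ W W' : Submodule ℂ (Fin 4 → ℂ),
      Module.finrank ℂ W + Module.finrank ℂ W' ≤ 4 + Module.finrank ℂ (W ⊓ W' : Submodule ℂ (Fin 4 → ℂ)) := by
    intro W W'
    have h1 := Submodule.finrank_sup_add_finrank_inf_eq W W'
    have h2 : Module.finrank ℂ (W ⊔ W' : Submodule ℂ (Fin 4 → ℂ)) ≤ 4 := by
      have := Submodule.finrank_le (W ⊔ W')
      rwa [Module.finrank_fin_fun] at this
    omega
  set U := (E ⊓ E.comap g) ⊓ E.comap (g ∘ₗ g) with hU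
  have hcomap2 : E.comap (g ∘ₗ g) = (E.comap g).comap g := by
    rw [Submodule.comap_comp]
  have hfrU : 1 ≤ Module.finrank ℂ U := by
    have e1 : Module.finrank ℂ (E.comap g) = Module.finrank ℂ E := hcomap E
    have e2 : Module.finrank ℂ (E.comap (g ∘ₗ g)) = Module.finrank ℂ E := by
      rw [hcomap2, hcomap, hcomap]
    have i1 := hdim E (E.comap g)
    have i2 := hdim (E ⊓ E.comap g) (E.comap (g ∘ₗ g))
    rw [← hU] at i2
    omega
  have hUg : ∀ u ∈ U, g u ∈ U := by
    intro u hu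
    simp only [hU, Submodule.mem_inf, Submodule.mem_comap, LinearMap.comp_apply] at hu ⊢
    obtain ⟨⟨h1, h2⟩, h3⟩ := hu
    refine ⟨⟨h2, h3⟩, ?_⟩
    rw [hg3]
    exact h1
  -- restrict g to U and find an eigenvector
  have hUnontriv : Nontrivial U := by
    apply Submodule.nontrivial_iff_ne_bot.mpr
    intro hbot
    rw [hbot, finrank_bot] at hfrU
    omega
  obtain ⟨ζ, hζ⟩ := Module.End.exists_eigenvalue (g.restrict hUg)
  obtain ⟨⟨u, hu⟩, huv⟩ := hζ.exists_hasEigenvector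
  have hu0 : u ≠ 0 := by
    intro h
    apply huv.2
    exact Subtype.ext h
  have hgu : g u = ζ • u := by
    have := huv.apply_eq_smul
    have := congrArg Subtype.val this
    simpa [LinearMap.restrict_apply] using this
  have huE : u ∈ E := hu.1.1
  have hAu : A.mulVec u = ν • u := (hmemE u).mp huE
  have hTu : (ρ T : Matrix (Fin 4) (Fin 4) ℂ).mulVec u = (ζ * ν) • u := by
    rw [← RR_mul_S, coe_rho_mul, ← mulVec_mulVec, hAu, mulVec_smul]
    have : B.mulVec u = ζ • u := hgu
    rw [this, smul_smul, mul_comm]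
  exact no_inv_line ρ hirr hu0 hAu hTu

lemma charpoly_diagonal {n : Type*} [Fintype n] [DecidableEq n] (dv : n → ℂ) :
    (Matrix.diagonal dv).charpoly = ∏ i, (X - C (dv i)) := by
  have h : charmatrix (Matrix.diagonal dv) = Matrix.diagonal (fun i => (X : ℂ[X]) - C (dv i)) := by
    ext i j
    by_cases hij : i = j
    · subst hij
      rw [charmatrix_apply_eq, Matrix.diagonal_apply_eq, Matrix.diagonal_apply_eq]
    · rw [charmatrix_apply_ne _ _ _ hij, Matrix.diagonal_apply_ne _ hij,
        Matrix.diagonal_apply_ne _ hij, map_zero, neg_zero]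
  rw [Matrix.charpoly, h, Matrix.det_diagonal]

lemma charpoly_of_sq (ρ : SL2Z →* GL (Fin 4) ℂ) (hirr : RepIrreducible ρ) (μ : ℂ) (hμ : μ ≠ 0)
    (hA : (ρ S : Matrix (Fin 4) (Fin 4) ℂ) * (ρ S : Matrix (Fin 4) (Fin 4) ℂ) = (μ * μ) • 1) :
    (ρ S : Matrix (Fin 4) (Fin 4) ℂ).charpoly = (X - C μ) ^ 2 * (X + C μ) ^ 2 := by
  set A := (ρ S : Matrix (Fin 4) (Fin 4) ℂ) with hAdef
  set f := A.mulVecLin with hf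
  have hAA : ∀ v, A.mulVec (A.mulVec v) = (μ * μ) • v := by
    intro v
    rw [mulVec_mulVec, hA, smul_mulVec, one_mulVec]
  set Ep := LinearMap.ker (f - μ • LinearMap.id) with hEp
  set Em := LinearMap.ker (f - (-μ) • LinearMap.id) with hEm
  have hmem : ∀ (ν : ℂ) v, v ∈ LinearMap.ker (f - ν • LinearMap.id) ↔ A.mulVec v = ν • v := by
    intro ν v
    rw [LinearMap.mem_ker, LinearMap.sub_apply, LinearMap.smul_apply, LinearMap.id_apply,
      mulVecLin_apply, sub_eq_zero]
  have hinf : Ep ⊓ Em = ⊥ := by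
    rw [eq_bot_iff]
    rintro v ⟨h1, h2⟩
    rw [SetLike.mem_coe, hmem] at h1 h2
    have h3 : (μ - -μ) • v = 0 := by rw [sub_smul, ← h1, ← h2, sub_self]
    have h4 : μ - -μ ≠ 0 := by
      simpa [sub_neg_eq_add, ← two_mul] using mul_ne_zero (two_ne_zero (α := ℂ)) hμ
    rcases smul_eq_zero.mp h3 with h | h
    · exact absurd h h4
    · exact h
  have hsup : Ep ⊔ Em = ⊤ := by
    rw [eq_top_iff]
    rintro v -
    have h1 : (2:ℂ)⁻¹ • (v + μ⁻¹ • A.mulVec v) ∈ Ep := by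
      rw [hEp, hmem, mulVec_smul, mulVec_add, mulVec_smul, hAA]
      match_scalars <;> field_simp
    have h2 : (2:ℂ)⁻¹ • (v - μ⁻¹ • A.mulVec v) ∈ Em := by
      rw [hEm, hmem, mulVec_smul, mulVec_sub, mulVec_smul, hAA]
      match_scalars <;> field_simp
    have hv : v = (2:ℂ)⁻¹ • (v + μ⁻¹ • A.mulVec v) + (2:ℂ)⁻¹ • (v - μ⁻¹ • A.mulVec v) := by
      match_scalars <;> field_simp <;> ring
    rw [hv]
    exact Submodule.add_mem_sup h1 h2
  have hrp : Module.finrank ℂ Ep ≤ 2 := dim_le_two ρ hirr μ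
  have hrm : Module.finrank ℂ Em ≤ 2 := dim_le_two ρ hirr (-μ)
  have hsum : Module.finrank ℂ Ep + Module.finrank ℂ Em = 4 := by
    have h1 := Submodule.finrank_sup_add_finrank_inf_eq Ep Em
    rw [hinf, hsup, finrank_bot, finrank_top, Module.finrank_fin_fun] at h1
    omega
  have hp2 : Module.finrank ℂ Ep = 2 := by omega
  have hm2 : Module.finrank ℂ Em = 2 := by omega
  have hcompl : IsCompl Ep Em := ⟨disjoint_iff.mpr hinf, codisjoint_iff.mpr hsup⟩
  let bp : Module.Basis (Fin 2) ℂ Ep := Module.finBasisOfFinrankEq ℂ Ep hp2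
  let bm : Module.Basis (Fin 2) ℂ Em := Module.finBasisOfFinrankEq ℂ Em hm2
  let b : Module.Basis (Fin 2 ⊕ Fin 2) ℂ (Fin 4 → ℂ) :=
    (bp.prod bm).map (Submodule.prodEquivOfIsCompl Ep Em hcompl)
  set dv : Fin 2 ⊕ Fin 2 → ℂ := Sum.elim (fun _ => μ) (fun _ => -μ) with hdv
  have hb : ∀ i, f (b i) = dv i • b i := by
    intro i
    rcases i with j | j
    · have hbi : b (Sum.inl j) = (bp j : Fin 4 → ℂ) := by
        show (Submodule.prodEquivOfIsCompl Ep Em hcompl) ((bp.prod bm) (Sum.inl j))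
          = (bp j : Fin 4 → ℂ)
        rw [Submodule.coe_prodEquivOfIsCompl', Module.Basis.prod_apply_inl_fst,
          Module.Basis.prod_apply_inl_snd, ZeroMemClass.coe_zero, add_zero]
      rw [hbi]
      show A.mulVecLin (bp j : Fin 4 → ℂ) = dv (Sum.inl j) • (bp j : Fin 4 → ℂ)
      rw [mulVecLin_apply, hdv]
      simp only [Sum.elim_inl]
      exact (hmem μ (bp j : Fin 4 → ℂ)).mp (bp j).2
    · have hbi : b (Sum.inr j) = (bm j : Fin 4 → ℂ) := by
        show (Submodule.prodEquivOfIsCompl Ep Em hcompl) ((bp.prod bm) (Sum.inr j))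
          = (bm j : Fin 4 → ℂ)
        rw [Submodule.coe_prodEquivOfIsCompl', Module.Basis.prod_apply_inr_fst,
          Module.Basis.prod_apply_inr_snd, ZeroMemClass.coe_zero, zero_add]
      rw [hbi]
      show A.mulVecLin (bm j : Fin 4 → ℂ) = dv (Sum.inr j) • (bm j : Fin 4 → ℂ)
      rw [mulVecLin_apply, hdv]
      simp only [Sum.elim_inr]
      exact (hmem (-μ) (bm j : Fin 4 → ℂ)).mp (bm j).2
  have htoM : LinearMap.toMatrix b b f = Matrix.diagonal dv := by
    ext i j
    rw [LinearMap.toMatrix_apply, hb j, _root_.map_smul, Module.Basis.repr_self]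
    by_cases hij : i = j
    · subst hij
      simp [Matrix.diagonal_apply_eq]
    · simp [Matrix.diagonal_apply_ne _ hij, Finsupp.single_apply, Ne.symm hij]
  have hchain : A.charpoly = (Matrix.diagonal dv).charpoly := by
    have h1 : LinearMap.toMatrix' f = A := by
      rw [hf, ← Matrix.toLin'_apply', LinearMap.toMatrix'_toLin']
    calc A.charpoly = (LinearMap.toMatrix' f).charpoly := by rw [h1]
    _ = f.charpoly := by
        rw [← LinearMap.toMatrix_eq_toMatrix']
        exact LinearMap.charpoly_toMatrix f (Pi.basisFun ℂ (Fin 4))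
    _ = (LinearMap.toMatrix b b f).charpoly := (LinearMap.charpoly_toMatrix f b).symm
    _ = (Matrix.diagonal dv).charpoly := by rw [htoM]
  rw [hchain, _root_.charpoly_diagonal, Fintype.prod_sum_type]
  simp only [hdv, Sum.elim_inl, Sum.elim_inr]
  rw [Finset.prod_const, Finset.prod_const, Finset.card_univ, Fintype.card_fin, map_neg,
    sub_neg_eq_add]


end Aux

theorem stmt_0 (ρ : SL2Z →* GL (Fin 4) ℂ) (hirr : RepIrreducible ρ) :
    (((ρ ModularGroup.S : Matrix (Fin 4) (Fin 4) ℂ).charpoly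
        = (X - C 1) ^ 2 * (X + C 1) ^ 2 ∨
      (ρ ModularGroup.S : Matrix (Fin 4) (Fin 4) ℂ).charpoly
        = (X - C Complex.I) ^ 2 * (X + C Complex.I) ^ 2) ∧
    (ρ ModularGroup.S : Matrix (Fin 4) (Fin 4) ℂ).det = 1) := by

  have hdet : ∀ μ : ℂ,
      (ρ S : Matrix (Fin 4) (Fin 4) ℂ).charpoly = (X - C μ) ^ 2 * (X + C μ) ^ 2 →
      (ρ S : Matrix (Fin 4) (Fin 4) ℂ).det = μ ^ 4 := by
    intro μ hμ
    rw [Matrix.det_eq_sign_charpoly_coeff, hμ, coeff_zero_eq_eval_zero]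
    simp [Fintype.card_fin]
    ring
  rcases rho_S_sq ρ hirr with h | h
  · have hcp := charpoly_of_sq ρ hirr 1 one_ne_zero (by rw [h]; norm_num)
    refine ⟨Or.inl hcp, ?_⟩
    rw [hdet 1 hcp]
    norm_num
  · have hcp := charpoly_of_sq ρ hirr Complex.I Complex.I_ne_zero
      (by rw [h, Complex.I_mul_I, neg_smul, one_smul])
    refine ⟨Or.inr hcp, ?_⟩
    rw [hdet Complex.I hcp]
    simp [pow_succ, Complex.I_mul_I]
end

section
/- Let ρ : SL₂(ℤ) → GL₄(ℂ) be an irreducible representation with ρ(T) = diag(e^{2πi r₁},…,e^{2πi r₄}) for real numbers r_j, and set r = r₁+r₂+r₃+r₄. Then 3r ∈ ℤ. -/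
open Matrix Real Complex

namespace SL2Aux

open ModularGroup Module

/-! ### Generation of SL(2,ℤ) by S and T -/

lemma natAbs_emod_lt (a c : ℤ) (h : c ≠ 0) : (a % c).natAbs < c.natAbs := by
  have h1 : 0 ≤ a % c := Int.emod_nonneg a h
  have h2 : a % c < |c| := by
    have := Int.emod_lt_of_pos a (abs_pos.mpr h); rwa [Int.emod_abs] at this
  rw [Int.abs_eq_natAbs] at h2
  omega

lemma S_mul_S : (S * S : SL2Z) = -1 := by
  apply Subtype.ext
  simp only [SpecialLinearGroup.coe_mul, coe_S, SpecialLinearGroup.coe_neg,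
    SpecialLinearGroup.coe_one]
  norm_num [Matrix.mul_fin_two]
  ext i j
  fin_cases i <;> fin_cases j <;> simp

lemma neg_T_zpow (b : ℤ) : (-(T ^ b) : SL2Z) = S * S * T ^ b := by
  rw [S_mul_S]; ext i j; simp

lemma mem_closure_aux : ∀ n : ℕ, ∀ A : SL2Z, (A.1 1 0).natAbs = n →
    A ∈ Subgroup.closure ({S, T} : Set SL2Z) := by
  intro n
  induction n using Nat.strong_induction_on with
  | _ n ih =>
    intro A hc
    set cl := Subgroup.closure ({S, T} : Set SL2Z) with hcl
    have hS : S ∈ cl := Subgroup.subset_closure (by simp)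
    have hT : T ∈ cl := Subgroup.subset_closure (by simp)
    by_cases h0 : A.1 1 0 = 0
    · -- c = 0 : A = ± T^b
      have hdet : A.1.det = 1 := A.2
      rw [Matrix.det_fin_two, h0] at hdet
      simp only [mul_zero, sub_zero] at hdet
      rcases Int.mul_eq_one_iff_eq_one_or_neg_one.mp hdet with ⟨h1, h2⟩ | ⟨h1, h2⟩
      · have : A = T ^ (A.1 0 1) := by
          apply Subtype.ext
          rw [coe_T_zpow]
          ext i j
          fin_cases i <;> fin_cases j <;> simp [h1, h2, h0]
        rw [this]; exact zpow_mem hT _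
      · have : A = -(T ^ (-(A.1 0 1))) := by
          apply Subtype.ext
          show A.1 = -(T ^ (-(A.1 0 1))).1
          rw [coe_T_zpow]
          ext i j
          fin_cases i <;> fin_cases j <;> simp [h1, h2, h0]
        rw [this, neg_T_zpow]
        exact mul_mem (mul_mem hS hS) (zpow_mem hT _)
    · -- c ≠ 0
      set a := A.1 0 0
      set c := A.1 1 0
      set q := a / c
      set B := S * T ^ (-q) * A with hB
      have hBc : B.1 1 0 = a % c := by
        have : (B : Matrix (Fin 2) (Fin 2) ℤ) = S.1 * (T ^ (-q)).1 * A.1 := by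
          simp [hB]
        rw [Int.emod_def]
        simp [this, coe_S, coe_T_zpow, Matrix.mul_apply, Fin.sum_univ_two]
        ring
      have hlt : (B.1 1 0).natAbs < n := by
        rw [hBc, ← hc]; exact natAbs_emod_lt a c h0
      have hBmem : B ∈ cl := ih _ hlt B rfl
      have : A = (T ^ q * S⁻¹) * B := by
        rw [hB]; group
      rw [this]
      exact mul_mem (mul_mem (zpow_mem hT q) (inv_mem hS)) hBmem

lemma closure_ST : Subgroup.closure ({S, T} : Set SL2Z) = ⊤ := by
  rw [eq_top_iff]
  intro A _
  exact mem_closure_aux _ A rfl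

/-! ### The element R = T * S⁻¹ of order 3 -/

def Rm : SL2Z := T * S⁻¹

lemma coe_S_inv : ((S⁻¹ : SL2Z) : Matrix (Fin 2) (Fin 2) ℤ) = !![0, 1; -1, 0] := by
  simp [SpecialLinearGroup.coe_inv, coe_S, adjugate_fin_two]

lemma coe_Rm : (Rm : Matrix (Fin 2) (Fin 2) ℤ) = !![-1, 1; -1, 0] := by
  show (T : Matrix (Fin 2) (Fin 2) ℤ) * ((S⁻¹ : SL2Z) : Matrix (Fin 2) (Fin 2) ℤ) = _
  rw [coe_T, coe_S_inv]
  norm_num [Matrix.mul_fin_two]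

lemma Rm_cube : Rm ^ 3 = 1 := by
  apply Subtype.ext
  show (Rm ^ 3 : SL2Z).1 = 1
  rw [pow_succ, pow_succ, pow_one]
  show (Rm : Matrix (Fin 2) (Fin 2) ℤ) * Rm * Rm = 1
  rw [coe_Rm]
  norm_num [Matrix.mul_fin_two]
  ext i j; fin_cases i <;> fin_cases j <;> simp

/-! ### Generalities on the representation -/

section Rep

variable (ρ : SL2Z →* GL (Fin 4) ℂ)

lemma coe_rho_mul (γ δ : SL2Z) : ((ρ (γ * δ) : Matrix (Fin 4) (Fin 4) ℂ))
    = (ρ γ : Matrix (Fin 4) (Fin 4) ℂ) * (ρ δ : Matrix (Fin 4) (Fin 4) ℂ) := by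
  rw [_root_.map_mul]; rfl

lemma coe_rho_one : ((ρ 1 : Matrix (Fin 4) (Fin 4) ℂ)) = 1 := by rw [_root_.map_one]; rfl

lemma rho_mul_inv (γ : SL2Z) :
    (ρ γ : Matrix (Fin 4) (Fin 4) ℂ) * (ρ γ⁻¹ : Matrix (Fin 4) (Fin 4) ℂ) = 1 := by
  rw [← coe_rho_mul, mul_inv_cancel, coe_rho_one]

noncomputable def rhoEquiv (γ : SL2Z) : (Fin 4 → ℂ) ≃ₗ[ℂ] (Fin 4 → ℂ) :=
  LinearEquiv.ofLinear ((ρ γ : Matrix (Fin 4) (Fin 4) ℂ).mulVecLin)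
    ((ρ γ⁻¹ : Matrix (Fin 4) (Fin 4) ℂ).mulVecLin)
    (by rw [← Matrix.mulVecLin_mul, rho_mul_inv, Matrix.mulVecLin_one])
    (by rw [← Matrix.mulVecLin_mul]; nth_rewrite 2 [show γ = γ⁻¹⁻¹ by group] at *
        rw [rho_mul_inv, Matrix.mulVecLin_one])

lemma finrank_map_rho (γ : SL2Z) (p : Submodule ℂ (Fin 4 → ℂ)) :
    finrank ℂ (p.map ((ρ γ : Matrix (Fin 4) (Fin 4) ℂ).mulVecLin)) = finrank ℂ p := by
  have : ((ρ γ : Matrix (Fin 4) (Fin 4) ℂ).mulVecLin)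
      = (rhoEquiv ρ γ : (Fin 4 → ℂ) →ₗ[ℂ] (Fin 4 → ℂ)) := rfl
  rw [this, LinearEquiv.finrank_map_eq]

/-! ### No 3-dimensional eigenspace of ρ(S) -/

lemma no_three_dim (hirr : RepIrreducible ρ) (μ : ℂ)
    (hE : finrank ℂ (LinearMap.ker
      ((ρ S : Matrix (Fin 4) (Fin 4) ℂ).mulVecLin - μ • LinearMap.id)) = 3) :
    False := by
  set E := LinearMap.ker
      ((ρ S : Matrix (Fin 4) (Fin 4) ℂ).mulVecLin - μ • LinearMap.id) with hEdef
  set g := (ρ Rm : Matrix (Fin 4) (Fin 4) ℂ).mulVecLin with hgdef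
  set W := (E ⊓ E.map g) ⊓ (E.map g).map g with hWdef
  have hg3 : ∀ p : Submodule ℂ (Fin 4 → ℂ), ((p.map g).map g).map g = p := by
    intro p
    rw [← Submodule.map_comp, ← Submodule.map_comp, ← Matrix.mulVecLin_mul, ← Matrix.mulVecLin_mul,
      ← coe_rho_mul, ← coe_rho_mul, show Rm * Rm * Rm = Rm ^ 3 by rw [pow_three, mul_assoc],
      Rm_cube, coe_rho_one, Matrix.mulVecLin_one, Submodule.map_id]
  have hfr : finrank ℂ (Fin 4 → ℂ) = 4 := by simp
  have hinf : ∀ p q : Submodule ℂ (Fin 4 → ℂ),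
      finrank ℂ p + finrank ℂ q ≤ 4 + finrank ℂ (p ⊓ q : Submodule ℂ (Fin 4 → ℂ)) := by
    intro p q
    have h1 := Submodule.finrank_sup_add_finrank_inf_eq p q
    have h2 : finrank ℂ (p ⊔ q : Submodule ℂ (Fin 4 → ℂ)) ≤ 4 :=
      (Submodule.finrank_le _).trans (le_of_eq hfr)
    omega
  have hmapE : finrank ℂ (E.map g) = 3 := by rw [finrank_map_rho, hE]
  have hmapE2 : finrank ℂ ((E.map g).map g) = 3 := by rw [finrank_map_rho, hmapE]
  have hWrank : 1 ≤ finrank ℂ W := by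
    have h1 := hinf E (E.map g)
    have h2 := hinf (E ⊓ E.map g) ((E.map g).map g)
    rw [hE, hmapE] at h1
    rw [hmapE2] at h2
    rw [hWdef]
    omega
  have hSW : ∀ v ∈ W, (ρ S : Matrix (Fin 4) (Fin 4) ℂ).mulVecLin v ∈ W := by
    intro v hv
    have hvE : v ∈ E := hv.1.1
    have : (ρ S : Matrix (Fin 4) (Fin 4) ℂ).mulVecLin v = μ • v := by
      have := hvE
      rw [hEdef, LinearMap.mem_ker, LinearMap.sub_apply, sub_eq_zero] at this
      simpa using this
    rw [this]
    exact W.smul_mem μ hv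
  have hRW : ∀ v ∈ W, g v ∈ W := by
    intro v hv
    refine ⟨⟨?_, ?_⟩, ?_⟩
    · have : g v ∈ ((E.map g).map g).map g := Submodule.mem_map_of_mem hv.2
      rwa [hg3] at this
    · exact Submodule.mem_map_of_mem hv.1.1
    · exact Submodule.mem_map_of_mem hv.1.2
  let Hc : Subgroup SL2Z :=
  { carrier := {γ | ∀ v ∈ W, (ρ γ : Matrix (Fin 4) (Fin 4) ℂ).mulVecLin v ∈ W}
    one_mem' := by intro v hv; rwa [coe_rho_one, Matrix.mulVecLin_one]
    mul_mem' := by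
      intro x y hx hy v hv
      rw [coe_rho_mul, Matrix.mulVecLin_mul]
      exact hx _ (hy v hv)
    inv_mem' := by
      intro x hx
      have hle : W.map ((ρ x : Matrix (Fin 4) (Fin 4) ℂ).mulVecLin) ≤ W := by
        rintro _ ⟨v, hv, rfl⟩; exact hx v hv
      have heq : W.map ((ρ x : Matrix (Fin 4) (Fin 4) ℂ).mulVecLin) = W :=
        Submodule.eq_of_le_of_finrank_le hle (le_of_eq (finrank_map_rho ρ x W).symm)
      intro v hv
      rw [← heq] at hv
      obtain ⟨w, hw, rfl⟩ := hv
      have : (ρ x⁻¹ : Matrix (Fin 4) (Fin 4) ℂ).mulVecLin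
          ((ρ x : Matrix (Fin 4) (Fin 4) ℂ).mulVecLin w) = w := by
        rw [← LinearMap.comp_apply, ← Matrix.mulVecLin_mul, ← coe_rho_mul, inv_mul_cancel,
          coe_rho_one, Matrix.mulVecLin_one, LinearMap.id_apply]
      rwa [this] }
  have hScl : S ∈ Hc := hSW
  have hTcl : T ∈ Hc := by
    have : T = Rm * S := by rw [Rm]; group
    rw [this]
    exact mul_mem hRW hScl
  have htop : Hc = ⊤ := by
    rw [← top_le_iff, ← closure_ST, Subgroup.closure_le]
    rintro x (rfl | rfl) <;> assumption
  have hinv : RepInvariant ρ W := by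
    intro γ v hv
    have hγ : γ ∈ Hc := htop ▸ Subgroup.mem_top γ
    have := hγ v hv
    rwa [Matrix.mulVecLin_apply] at this
  rcases hirr.2 W hinv with h | h
  · rw [h, finrank_bot] at hWrank; omega
  · have : E = ⊤ := top_le_iff.mp (h ▸ (inf_le_left.trans inf_le_left : W ≤ E))
    rw [this, finrank_top, hfr] at hE
    omega

/-! ### Determinant of a linear map with two eigenspaces -/

lemma det_of_compl_eigenspaces (lam : ℂ) (E₁ E₂ : Submodule ℂ (Fin 4 → ℂ))
    (hcompl : IsCompl E₁ E₂) (f : (Fin 4 → ℂ) →ₗ[ℂ] (Fin 4 → ℂ))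
    (h1 : ∀ x ∈ E₁, f x = lam • x) (h2 : ∀ x ∈ E₂, f x = (-lam) • x) :
    LinearMap.det f = lam ^ (finrank ℂ E₁) * (-lam) ^ (finrank ℂ E₂) := by
  classical
  set b₁ := finBasis ℂ E₁
  set b₂ := finBasis ℂ E₂
  set e := Submodule.prodEquivOfIsCompl E₁ E₂ hcompl
  set b := (b₁.prod b₂).map e with hb
  set D : Matrix (Fin (finrank ℂ E₁) ⊕ Fin (finrank ℂ E₂))
      (Fin (finrank ℂ E₁) ⊕ Fin (finrank ℂ E₂)) ℂ :=
    Matrix.diagonal (Sum.elim (fun _ => lam) (fun _ => -lam)) with hD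
  have hfb : ∀ i, f (b i) = D i i • b i := by
    intro i
    have hbi : (b i) = e ((b₁.prod b₂) i) := by rw [hb, Basis.map_apply]
    cases i with
    | inl i =>
      have : b (Sum.inl i) = (b₁ i : Fin 4 → ℂ) := by
        rw [hbi, Basis.prod_apply, Submodule.coe_prodEquivOfIsCompl']
        simp
      rw [this, h1 _ (b₁ i).2, hD]
      simp [Matrix.diagonal_apply_eq]
    | inr i =>
      have : b (Sum.inr i) = (b₂ i : Fin 4 → ℂ) := by
        rw [hbi, Basis.prod_apply, Submodule.coe_prodEquivOfIsCompl']
        simp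
      rw [this, h2 _ (b₂ i).2, hD]
      simp [Matrix.diagonal_apply_eq]
  have hf : f = Matrix.toLin b b D := by
    apply b.ext
    intro i
    rw [Matrix.toLin_self, hfb i]
    rw [Finset.sum_eq_single i]
    · intro j _ hj
      rw [hD, Matrix.diagonal_apply_ne _ hj, zero_smul]
    · intro h; exact absurd (Finset.mem_univ i) h
  rw [hf, LinearMap.det_toLin b D, Matrix.det_diagonal, Fintype.prod_sum_type]
  simp

/-! ### det ρ(S) = 1 -/

lemma det_rho_S (hirr : RepIrreducible ρ) (lam : ℂ) (hlam : lam ≠ 0) (hlam4 : lam ^ 4 = 1)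
    (hM2 : (ρ S : Matrix (Fin 4) (Fin 4) ℂ) * (ρ S : Matrix (Fin 4) (Fin 4) ℂ)
      = lam ^ 2 • 1) :
    ((ρ S : Matrix (Fin 4) (Fin 4) ℂ)).det = 1 := by
  classical
  set M := (ρ S : Matrix (Fin 4) (Fin 4) ℂ) with hM
  set f := M.mulVecLin with hf
  have hff : ∀ x, f (f x) = lam ^ 2 • x := by
    intro x
    rw [hf, ← LinearMap.comp_apply, ← Matrix.mulVecLin_mul, hM2]
    simp [Matrix.mulVecLin_apply, Matrix.smul_mulVec, Matrix.one_mulVec]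
  set E₁ := LinearMap.ker (f - lam • LinearMap.id) with hE1
  set E₂ := LinearMap.ker (f - (-lam) • LinearMap.id) with hE2
  have hmem1 : ∀ x, x ∈ E₁ ↔ f x = lam • x := by
    intro x; rw [hE1, LinearMap.mem_ker, LinearMap.sub_apply, sub_eq_zero]; simp
  have hmem2 : ∀ x, x ∈ E₂ ↔ f x = (-lam) • x := by
    intro x; rw [hE2, LinearMap.mem_ker, LinearMap.sub_apply, sub_eq_zero]; simp
  have hcompl : IsCompl E₁ E₂ := by
    constructor
    · rw [disjoint_iff]
      ext x
      simp only [Submodule.mem_inf, Submodule.mem_bot]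
      constructor
      · rintro ⟨hx1, hx2⟩
        rw [hmem1] at hx1
        rw [hmem2] at hx2
        have h0 : lam • x = -(lam • x) := by rw [← neg_smul]; exact hx1.symm.trans hx2
        have : (2 * lam) • x = 0 := by
          rw [two_mul, add_smul]
          exact eq_neg_iff_add_eq_zero.mp h0
        rcases smul_eq_zero.mp this with h | h
        · exact absurd h (by simp [hlam])
        · exact h
      · rintro rfl; simp
    · rw [codisjoint_iff, eq_top_iff]
      intro x _
      have hu : f x + lam • x ∈ E₁ := by
        rw [hmem1, map_add, hff, LinearMap.map_smul]
        rw [pow_two, mul_smul]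
        module
      have hv : f x - lam • x ∈ E₂ := by
        rw [hmem2, map_sub, hff, LinearMap.map_smul]
        rw [pow_two, mul_smul]
        module
      have h2l : (2 * lam) ≠ 0 := by simp [hlam]
      have hx : x = (2 * lam)⁻¹ • ((f x + lam • x) - (f x - lam • x)) := by
        rw [show (f x + lam • x) - (f x - lam • x) = (2 * lam) • x by
          rw [two_mul, add_smul]; module]
        rw [smul_smul, inv_mul_cancel₀ h2l, one_smul]
      rw [hx]
      exact Submodule.smul_mem _ _ (Submodule.sub_mem _
        (Submodule.mem_sup_left hu) (Submodule.mem_sup_right hv))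
  have hsum : finrank ℂ E₁ + finrank ℂ E₂ = 4 := by
    have := Submodule.finrank_add_eq_of_isCompl hcompl
    simpa using this
  have hdet : M.det = lam ^ (finrank ℂ E₁) * (-lam) ^ (finrank ℂ E₂) := by
    rw [← LinearMap.det_toLin' M]
    have : Matrix.toLin' M = f := by rw [hf]; rfl
    rw [this]
    exact det_of_compl_eigenspaces lam E₁ E₂ hcompl f
      (fun x hx => (hmem1 x).mp hx) (fun x hx => (hmem2 x).mp hx)
  -- the exponent of -1
  have hd2 : Even (finrank ℂ E₂) := by
    by_contra hodd
    rw [Nat.not_even_iff_odd] at hodd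
    have hle : finrank ℂ E₂ ≤ 4 := by omega
    interval_cases h : (finrank ℂ E₂)
    · exact absurd hodd (by decide)
    · -- finrank E₂ = 1, so finrank E₁ = 3
      have h3 : finrank ℂ E₁ = 3 := by omega
      exact no_three_dim ρ hirr lam (by rw [← hE1]; exact h3)
    · exact absurd hodd (by decide)
    · exact no_three_dim ρ hirr (-lam) (by rw [← hE2]; exact h)
    · exact absurd hodd (by decide)
  rw [hdet, neg_pow, mul_comm (((-1 : ℂ)) ^ _) _, ← mul_assoc, ← pow_add, hsum, hlam4,
    hd2.neg_one_pow, one_mul]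


/-! ### ρ(-1) is ± identity (Schur) -/

lemma eq_of_mulVec_eq {A B : Matrix (Fin 4) (Fin 4) ℂ}
    (h : ∀ v, A.mulVec v = B.mulVec v) : A = B := by
  ext i j
  have := congrFun (h (Pi.single j 1)) i
  rwa [Matrix.mulVec_single_one, Matrix.mulVec_single_one] at this

lemma neg_one_mul_self : ((-1 : SL2Z) * (-1) = 1) := by
  apply Subtype.ext
  show (-1 : Matrix (Fin 2) (Fin 2) ℤ) * (-1) = 1
  norm_num

lemma neg_one_comm (γ : SL2Z) : (-1 : SL2Z) * γ = γ * (-1) := by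
  apply Subtype.ext
  show (-1 : Matrix (Fin 2) (Fin 2) ℤ) * (γ : Matrix (Fin 2) (Fin 2) ℤ) = (γ : Matrix (Fin 2) (Fin 2) ℤ) * (-1)
  norm_num

lemma rho_neg_one (ρ : SL2Z →* GL (Fin 4) ℂ) (hirr : RepIrreducible ρ) :
    (ρ (-1) : Matrix (Fin 4) (Fin 4) ℂ) = 1 ∨ (ρ (-1) : Matrix (Fin 4) (Fin 4) ℂ) = -1 := by
  set N := (ρ (-1) : Matrix (Fin 4) (Fin 4) ℂ) with hN
  have hN2 : N * N = 1 := by rw [hN, ← coe_rho_mul, neg_one_mul_self, coe_rho_one]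
  have hcomm : ∀ γ : SL2Z, N * (ρ γ : Matrix (Fin 4) (Fin 4) ℂ)
      = (ρ γ : Matrix (Fin 4) (Fin 4) ℂ) * N := fun γ => by
    rw [hN, ← coe_rho_mul, ← coe_rho_mul, neg_one_comm]
  set Wp := LinearMap.ker (N.mulVecLin - LinearMap.id) with hWp
  set Wm := LinearMap.ker (N.mulVecLin + LinearMap.id) with hWm
  have hmemp : ∀ v, v ∈ Wp ↔ N.mulVec v = v := by
    intro v
    rw [hWp, LinearMap.mem_ker, LinearMap.sub_apply, sub_eq_zero]
    simp [Matrix.mulVecLin_apply]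
  have hmemm : ∀ v, v ∈ Wm ↔ N.mulVec v = -v := by
    intro v
    rw [hWm, LinearMap.mem_ker, LinearMap.add_apply, add_eq_zero_iff_eq_neg]
    simp [Matrix.mulVecLin_apply]
  have hinvp : RepInvariant ρ Wp := by
    intro γ v hv
    rw [hmemp] at hv ⊢
    rw [Matrix.mulVec_mulVec, hcomm γ, ← Matrix.mulVec_mulVec, hv]
  have hinvm : RepInvariant ρ Wm := by
    intro γ v hv
    rw [hmemm] at hv ⊢
    rw [Matrix.mulVec_mulVec, hcomm γ, ← Matrix.mulVec_mulVec, hv, Matrix.mulVec_neg]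
  have hsup : Wp ⊔ Wm = ⊤ := by
    rw [eq_top_iff]
    intro v _
    have hu : (2 : ℂ)⁻¹ • (v + N.mulVec v) ∈ Wp := by
      apply Submodule.smul_mem
      rw [hmemp, Matrix.mulVec_add, Matrix.mulVec_mulVec, hN2, Matrix.one_mulVec, add_comm]
    have hw : (2 : ℂ)⁻¹ • (v - N.mulVec v) ∈ Wm := by
      apply Submodule.smul_mem
      rw [hmemm, Matrix.mulVec_sub, Matrix.mulVec_mulVec, hN2, Matrix.one_mulVec, neg_sub]
    have : v = (2 : ℂ)⁻¹ • (v + N.mulVec v) + (2 : ℂ)⁻¹ • (v - N.mulVec v) := by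
      rw [smul_add, smul_sub]
      module
    rw [this]
    exact Submodule.add_mem _ (Submodule.mem_sup_left hu) (Submodule.mem_sup_right hw)
  rcases hirr.2 Wp hinvp with hp | hp
  · rcases hirr.2 Wm hinvm with hm | hm
    · exfalso
      rw [hp, hm, sup_idem] at hsup
      exact hirr.1 hsup
    · right
      apply eq_of_mulVec_eq
      intro v
      have : v ∈ Wm := hm ▸ Submodule.mem_top
      rw [(hmemm v).mp this, Matrix.neg_mulVec, Matrix.one_mulVec]
  · left
    apply eq_of_mulVec_eq
    intro v
    have : v ∈ Wp := hp ▸ Submodule.mem_top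
    rw [(hmemp v).mp this, Matrix.one_mulVec]

end Rep

end SL2Aux

theorem stmt_1 (ρ : SL2Z →* GL (Fin 4) ℂ) (hirr : RepIrreducible ρ)
    (r : Fin 4 → ℝ)
    (hT : (ρ ModularGroup.T : Matrix (Fin 4) (Fin 4) ℂ)
        = Matrix.diagonal fun j => Complex.exp (2 * π * Complex.I * (r j))) :
    ∃ n : ℤ, 3 * (r 0 + r 1 + r 2 + r 3) = n := by
  classical
  set M := (ρ ModularGroup.S : Matrix (Fin 4) (Fin 4) ℂ) with hM
  have hSS : M * M = (ρ (-1) : Matrix (Fin 4) (Fin 4) ℂ) := by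
    rw [hM, ← SL2Aux.coe_rho_mul, SL2Aux.S_mul_S]
  have hdetS : M.det = 1 := by
    rcases SL2Aux.rho_neg_one ρ hirr with h | h
    · exact SL2Aux.det_rho_S ρ hirr 1 one_ne_zero (one_pow 4) (by rw [hSS, h]; simp)
    · exact SL2Aux.det_rho_S ρ hirr Complex.I Complex.I_ne_zero
        (by simp) (by rw [hSS, h, Complex.I_sq]; simp)
  have hdetR : ((ρ SL2Aux.Rm : Matrix (Fin 4) (Fin 4) ℂ).det) ^ 3 = 1 := by
    rw [← Matrix.det_pow]
    have h3 : (ρ SL2Aux.Rm : Matrix (Fin 4) (Fin 4) ℂ) ^ 3 = 1 := by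
      rw [pow_three, ← SL2Aux.coe_rho_mul, ← SL2Aux.coe_rho_mul,
        show SL2Aux.Rm * (SL2Aux.Rm * SL2Aux.Rm) = SL2Aux.Rm ^ 3 by rw [pow_three],
        SL2Aux.Rm_cube, SL2Aux.coe_rho_one]
    rw [h3, Matrix.det_one]
  have hTRS : ModularGroup.T = SL2Aux.Rm * ModularGroup.S := by rw [SL2Aux.Rm]; group
  have hdetT3 : ((ρ ModularGroup.T : Matrix (Fin 4) (Fin 4) ℂ).det) ^ 3 = 1 := by
    rw [hTRS, SL2Aux.coe_rho_mul, Matrix.det_mul, ← hM, hdetS, mul_one, hdetR]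
  have hdiag : (ρ ModularGroup.T : Matrix (Fin 4) (Fin 4) ℂ).det
      = Complex.exp (2 * (π : ℂ) * Complex.I * ((r 0 : ℂ) + (r 1 : ℂ) + (r 2 : ℂ) + (r 3 : ℂ))) := by
    rw [hT, Matrix.det_diagonal, ← Complex.exp_sum]
    congr 1
    rw [Fin.sum_univ_four]
    ring
  rw [hdiag, ← Complex.exp_nat_mul, Complex.exp_eq_one_iff] at hdetT3
  obtain ⟨n, hn⟩ := hdetT3
  refine ⟨n, ?_⟩
  have h2πI : (2 * (π : ℂ) * Complex.I) ≠ 0 :=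
    mul_ne_zero (mul_ne_zero two_ne_zero (Complex.ofReal_ne_zero.mpr Real.pi_ne_zero))
      Complex.I_ne_zero
  have key : ((3 : ℂ) * ((r 0 : ℂ) + (r 1 : ℂ) + (r 2 : ℂ) + (r 3 : ℂ))) * (2 * (π : ℂ) * Complex.I)
      = (n : ℂ) * (2 * (π : ℂ) * Complex.I) := by
    rw [← hn]
    push_cast
    ring
  have h3 := mul_right_cancel₀ h2πI key
  exact_mod_cast h3
end

section
/- The iterated modular derivative D_k^n = D_{k+2(n−1)} ∘ ⋯ ∘ D_{k+2} ∘ D_k can be written as qⁿ dⁿ/dqⁿ + q^{n−1} f_{n,n−1}(q) d^{n−1}/dq^{n−1} + ⋯ + f_{n,0}(q), where each f_{n,j} is holomorphic in |q| < 1, and the constant term of the subleading coefficient is f_{n,n−1}(0) = n(5(n−1) − k)/12. -/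
open Real Complex

/-- `E₂(q) = 1 − 24 Σ_{n≥1} σ₁(n) qⁿ`. -/
noncomputable def E2 (q : ℂ) : ℂ :=
  1 - 24 * ∑' n : ℕ, ((∑ d ∈ Nat.divisors (n + 1), d : ℕ) : ℂ) * q ^ (n + 1)

private noncomputable def sigCoef : ℕ → ℂ
  | 0 => 0
  | n + 1 => ((∑ d ∈ Nat.divisors (n + 1), d : ℕ) : ℂ)

private lemma sigCoef_norm_le (m : ℕ) : ‖sigCoef m‖ ≤ (m : ℝ) ^ 2 := by
  cases m with
  | zero => simp [sigCoef]
  | succ n =>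
    have h1 : (∑ d ∈ Nat.divisors (n+1), d) ≤ (n+1) * (n+1) := by
      calc ∑ d ∈ Nat.divisors (n+1), d ≤ ∑ _d ∈ Nat.divisors (n+1), (n+1) :=
            Finset.sum_le_sum fun d hd => Nat.divisor_le hd
        _ = (Nat.divisors (n+1)).card * (n+1) := by simp [Finset.sum_const, mul_comm]
        _ ≤ (n+1) * (n+1) := by
            gcongr
            have hsub : Nat.divisors (n+1) ⊆ Finset.Icc 1 (n+1) := fun d hd =>
              Finset.mem_Icc.mpr ⟨Nat.pos_of_mem_divisors hd, Nat.divisor_le hd⟩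
            calc (Nat.divisors (n+1)).card ≤ (Finset.Icc 1 (n+1)).card :=
                  Finset.card_le_card hsub
              _ = n + 1 := by simp
    have h2 : ‖sigCoef (n+1)‖ = ((∑ d ∈ Nat.divisors (n+1), d : ℕ) : ℝ) := by
      show ‖((∑ d ∈ Nat.divisors (n+1), d : ℕ) : ℂ)‖ = _
      rw [← Complex.norm_natCast]
    rw [h2]
    calc ((∑ d ∈ Nat.divisors (n+1), d : ℕ) : ℝ) ≤ (((n+1) * (n+1) : ℕ) : ℝ) := by
          exact_mod_cast h1
      _ = (((n:ℕ)+1 : ℕ) : ℝ) ^ 2 := by push_cast; ring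

private noncomputable def sigSeries : FormalMultilinearSeries ℂ ℂ ℂ :=
  FormalMultilinearSeries.ofScalars ℂ sigCoef

private lemma one_le_sigSeries_radius : 1 ≤ sigSeries.radius := by
  refine ENNReal.le_of_forall_nnreal_lt fun r hr => ?_
  apply FormalMultilinearSeries.le_radius_of_summable_norm
  have hr1 : (r : ℝ) < 1 := by exact_mod_cast hr
  have hsum : Summable (fun n : ℕ => (n : ℝ) ^ 2 * (r : ℝ) ^ n) :=
    summable_pow_mul_geometric_of_norm_lt_one 2
      (by rw [Real.norm_eq_abs, _root_.abs_of_nonneg r.coe_nonneg]; exact hr1)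
  refine hsum.of_nonneg_of_le (fun n => by positivity) (fun n => ?_)
  have : ‖sigSeries n‖ = ‖sigCoef n‖ := FormalMultilinearSeries.ofScalars_norm ℂ sigCoef n
  rw [this]
  have := sigCoef_norm_le n
  have hrn : (0:ℝ) ≤ (r:ℝ) ^ n := by positivity
  nlinarith [norm_nonneg (sigCoef n)]

private lemma ball_subset_eball :
    Metric.ball (0 : ℂ) 1 ⊆ Metric.eball (0 : ℂ) sigSeries.radius := by
  rw [← Metric.emetric_ball]
  exact EMetric.ball_subset_ball (by simpa using one_le_sigSeries_radius)

private lemma hasSum_sig {q : ℂ} (hq : q ∈ Metric.ball (0 : ℂ) 1) :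
    HasSum (fun n : ℕ => ((∑ d ∈ Nat.divisors (n + 1), d : ℕ) : ℂ) * q ^ (n + 1))
      (sigSeries.sum q) := by
  have h := sigSeries.hasSum (ball_subset_eball hq)
  have h' : HasSum (fun n => sigCoef n * q ^ n) (sigSeries.sum q) := by
    have he : (fun n => sigSeries n fun _ => q) = fun n => sigCoef n * q ^ n := by
      funext n
      rw [sigSeries, FormalMultilinearSeries.ofScalars_apply_eq, smul_eq_mul]
    rwa [he] at h
  have h2 : HasSum (fun n => sigCoef (n + 1) * q ^ (n + 1)) (sigSeries.sum q) := by
    refine (hasSum_nat_add_iff (f := fun n => sigCoef n * q ^ n) 1).mpr ?_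
    simpa [Finset.sum_range_one, sigCoef] using h'
  simpa [sigCoef] using h2

private lemma E2_eq_on_ball {q : ℂ} (hq : q ∈ Metric.ball (0 : ℂ) 1) :
    E2 q = 1 - 24 * sigSeries.sum q := by
  unfold E2
  rw [(hasSum_sig hq).tsum_eq]

lemma E2_analyticOnNhd : AnalyticOnNhd ℂ E2 (Metric.ball (0 : ℂ) 1) := by
  have hrad : (0 : ENNReal) < sigSeries.radius := lt_of_lt_of_le one_pos one_le_sigSeries_radius
  have h1 : AnalyticOnNhd ℂ sigSeries.sum (Metric.ball (0 : ℂ) 1) :=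
    (sigSeries.hasFPowerSeriesOnBall hrad).analyticOnNhd.mono
      (by simpa using ball_subset_eball)
  have h2 : AnalyticOnNhd ℂ (fun q => 1 - 24 * sigSeries.sum q) (Metric.ball (0 : ℂ) 1) :=
    analyticOnNhd_const.sub (analyticOnNhd_const.mul h1)
  exact (analyticOnNhd_congr Metric.isOpen_ball (fun q hq => E2_eq_on_ball hq)).mpr h2

lemma E2_zero : E2 0 = 1 := by
  simp [E2]

/-- The modular derivative in weight `k`: `D_k f = q·df/dq − (k/12)·E₂·f`. -/
noncomputable def serreD (k : ℝ) (f : ℂ → ℂ) : ℂ → ℂ :=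
  fun q => q * deriv f q - (k / 12 : ℂ) * E2 q * f q

/-- The iterated modular derivative `D_k^n = D_{k+2(n−1)} ∘ ⋯ ∘ D_k`. -/
noncomputable def serreDIter : ℕ → ℝ → (ℂ → ℂ) → (ℂ → ℂ)
  | 0, _, f => f
  | n + 1, k, f => serreD (k + 2 * n) (serreDIter n k f)

/-- `D_k^n = qⁿ dⁿ/dqⁿ + Σ_{j<n} q^j f_{n,j}(q) d^j/dq^j` with `f_{n,j}` holomorphic in
`|q|<1` and `f_{n,n−1}(0) = n(5(n−1)−k)/12`. -/
theorem stmt_9 (n : ℕ) (k : ℝ) :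
    ∃ c : ℕ → (ℂ → ℂ),
      (∀ j < n, AnalyticOn ℂ (c j) (Metric.ball (0 : ℂ) 1)) ∧
      (∀ f : ℂ → ℂ, DifferentiableOn ℂ f (Metric.ball (0 : ℂ) 1) →
        ∀ q ∈ Metric.ball (0 : ℂ) 1,
          serreDIter n k f q
            = q ^ n * iteratedDeriv n f q
              + ∑ j ∈ Finset.range n, q ^ j * c j q * iteratedDeriv j f q) ∧
      (1 ≤ n → c (n - 1) 0 = (n : ℂ) * (5 * ((n : ℂ) - 1) - (k : ℂ)) / 12) := by
  induction n with
  | zero =>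
    exact ⟨fun _ => 0, fun j hj => absurd hj (Nat.not_lt_zero j),
      fun f hf q hq => by simp [serreDIter], fun h => absurd h (by norm_num)⟩
  | succ n ih =>
    obtain ⟨c, hc_an, hc_eq, hc0⟩ := ih
    have hopen : IsOpen (Metric.ball (0:ℂ) 1) := Metric.isOpen_ball
    set b : ℕ → ℂ → ℂ := fun j => if j = n then (fun _ => (1:ℂ)) else c j with hbdef
    set μ : ℂ := ((k : ℂ) + 2 * n) / 12 with hμdef
    set c' : ℕ → ℂ → ℂ := fun j q =>
      (if j = 0 then 0 else b (j - 1) q) + (j : ℂ) * b j q + q * deriv (b j) q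
        - μ * E2 q * b j q with hc'def
    have hb_an : ∀ j, j ≤ n → AnalyticOnNhd ℂ (b j) (Metric.ball (0:ℂ) 1) := by
      intro j hj
      by_cases h : j = n
      · simp only [hbdef, if_pos h]
        exact analyticOnNhd_const
      · simp only [hbdef, if_neg h]
        exact (hopen.analyticOn_iff_analyticOnNhd).mp (hc_an j (lt_of_le_of_ne hj h))
    have hbn : ∀ z : ℂ, b n z = 1 := by intro z; simp [hbdef]
    have hc'_an : ∀ j, j ≤ n → AnalyticOnNhd ℂ (c' j) (Metric.ball (0:ℂ) 1) := by
      intro j hj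
      have h1 : AnalyticOnNhd ℂ (fun q : ℂ => if j = 0 then (0:ℂ) else b (j-1) q)
          (Metric.ball (0:ℂ) 1) := by
        by_cases h : j = 0
        · simp only [if_pos h]; exact analyticOnNhd_const
        · simp only [if_neg h]; exact hb_an (j-1) (le_trans (Nat.sub_le j 1) hj)
      simp only [hc'def]
      exact ((h1.add (analyticOnNhd_const.mul (hb_an j hj))).add
        (analyticOnNhd_id.mul ((hb_an j hj).deriv))).sub
        ((analyticOnNhd_const.mul E2_analyticOnNhd).mul (hb_an j hj))
    refine ⟨c', ?_, ?_, ?_⟩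
    · intro j hj
      exact (hc'_an j (Nat.lt_succ_iff.mp hj)).analyticOn
    · intro f hf q hq
      have hfa : AnalyticOnNhd ℂ f (Metric.ball (0:ℂ) 1) := hf.analyticOnNhd hopen
      have hdi : ∀ j : ℕ, AnalyticOnNhd ℂ (iteratedDeriv j f) (Metric.ball (0:ℂ) 1) := by
        intro j; rw [iteratedDeriv_eq_iterate]; exact hfa.iterated_deriv j
      set F : ℂ → ℂ := fun z => ∑ j ∈ Finset.range (n+1), z ^ j * b j z * iteratedDeriv j f z
        with hFdef
      have hgF : Set.EqOn (serreDIter n k f) F (Metric.ball (0:ℂ) 1) := by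
        intro z hz
        have h1 : ∀ j ∈ Finset.range n, z ^ j * b j z * iteratedDeriv j f z
            = z ^ j * c j z * iteratedDeriv j f z := by
          intro j hj
          have hne : j ≠ n := Nat.ne_of_lt (Finset.mem_range.mp hj)
          simp [hbdef, hne]
        rw [hc_eq f hf z hz]
        simp only [hFdef]
        rw [Finset.sum_range_succ, Finset.sum_congr rfl h1, hbn z, mul_one]
        ring
      have hterm : ∀ j ∈ Finset.range (n+1),
          HasDerivAt (fun z => z ^ j * b j z * iteratedDeriv j f z)
            ((↑j * q ^ (j-1) * b j q + q ^ j * deriv (b j) q) * iteratedDeriv j f q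
              + q ^ j * b j q * iteratedDeriv (j+1) f q) q := by
        intro j hj
        have hjn : j ≤ n := Nat.lt_succ_iff.mp (Finset.mem_range.mp hj)
        have h1 : HasDerivAt (fun z : ℂ => z ^ j) (↑j * q ^ (j-1)) q := hasDerivAt_pow j q
        have h2 : HasDerivAt (b j) (deriv (b j) q) q :=
          ((hb_an j hjn) q hq).differentiableAt.hasDerivAt
        have h3 : HasDerivAt (iteratedDeriv j f) (iteratedDeriv (j+1) f q) q := by
          rw [iteratedDeriv_succ]
          exact ((hdi j) q hq).differentiableAt.hasDerivAt
        exact (h1.mul h2).mul h3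
      have hF' : HasDerivAt F (∑ j ∈ Finset.range (n+1),
          ((↑j * q ^ (j-1) * b j q + q ^ j * deriv (b j) q) * iteratedDeriv j f q
            + q ^ j * b j q * iteratedDeriv (j+1) f q)) q := HasDerivAt.fun_sum hterm
      have hderiv_g : deriv (serreDIter n k f) q = deriv F q :=
        Filter.EventuallyEq.deriv_eq (Filter.eventuallyEq_of_mem (hopen.mem_nhds hq) hgF)
      have hserre : serreDIter (n+1) k f q = q * deriv F q - μ * E2 q * F q := by
        show serreD (k + 2 * n) (serreDIter n k f) q = _
        rw [serreD]
        rw [hderiv_g, hgF hq]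
        have : ((k + 2 * (n:ℝ) : ℝ) : ℂ) / 12 = μ := by
          rw [hμdef]; push_cast; ring
        rw [this]
      rw [hserre, hF'.deriv]
      simp only [hFdef]
      rw [Finset.mul_sum, Finset.mul_sum, ← Finset.sum_sub_distrib]
      have key : ∀ j ∈ Finset.range (n+1),
          q * ((↑j * q ^ (j-1) * b j q + q ^ j * deriv (b j) q) * iteratedDeriv j f q
            + q ^ j * b j q * iteratedDeriv (j+1) f q)
          - μ * E2 q * (q ^ j * b j q * iteratedDeriv j f q)
          = q ^ j * c' j q * iteratedDeriv j f q
            + (q ^ (j+1) * b j q * iteratedDeriv (j+1) f q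
               - (if j = 0 then 0 else q ^ j * b (j-1) q * iteratedDeriv j f q)) := by
        intro j hj
        have hpow : q * (↑j * q ^ (j - 1)) = ↑j * q ^ j := by
          cases j with
          | zero => simp
          | succ m => rw [Nat.succ_sub_one]; push_cast; ring
        simp only [hc'def]
        by_cases h : j = 0
        · subst h; simp only [if_pos rfl]
          simp
          ring
        · simp only [if_neg h]
          linear_combination b j q * iteratedDeriv j f q * hpow
      rw [Finset.sum_congr rfl key, Finset.sum_add_distrib]
      have hGH : ∑ j ∈ Finset.range (n+1),
          (q ^ (j+1) * b j q * iteratedDeriv (j+1) f q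
            - (if j = 0 then 0 else q ^ j * b (j-1) q * iteratedDeriv j f q))
          = q ^ (n+1) * iteratedDeriv (n+1) f q := by
        rw [Finset.sum_sub_distrib]
        rw [Finset.sum_range_succ (fun j => q ^ (j+1) * b j q * iteratedDeriv (j+1) f q) n]
        rw [Finset.sum_range_succ'
          (fun j => if j = 0 then 0 else q ^ j * b (j-1) q * iteratedDeriv j f q) n]
        simp only [Nat.succ_ne_zero, if_neg, if_pos rfl, Nat.add_sub_cancel, hbn, mul_one,
          if_true, if_false]
        ring
      rw [hGH]
      ring
    · intro _
      simp only [Nat.add_sub_cancel]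
      simp only [hc'def]
      rw [E2_zero]
      have hb0 : b n 0 = 1 := hbn 0
      by_cases h : n = 0
      · subst h
        simp only [if_pos rfl, hb0]
        simp [hμdef]
        ring
      · have hcn : c (n-1) 0 = (n:ℂ) * (5*((n:ℂ)-1) - (k:ℂ))/12 :=
          hc0 (Nat.one_le_iff_ne_zero.mpr h)
        have hne : n - 1 ≠ n := by omega
        have hb1 : b (n-1) 0 = c (n-1) 0 := by simp [hbdef, hne]
        rw [if_neg h, hb1, hcn, hb0, hμdef]
        push_cast
        field_simp
        ring
end
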